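/- Let A be a commutative ring, g ≥ 1 an integer, μ ∈ A, and let G = Σ_{i=0}^{2g−2} G_i(u) T^i ∈ A[u][T] be a polynomial of degree at most 2g−2 in T satisfying: (i) G_{2g−2−i}(u) = u^{g−1−i} G_i(u) for all 0 ≤ i ≤ g−1; (ii) G(T,1) = μ·(1 + T + ⋯ + T^{2g−2}) in A[T]; (iii) G_0(u) = (μ−1) + u; (iv) deg_u G_i ≤ ⌊i/2⌋ + 1 for all 0 ≤ i ≤ 2g−2. Define Q(T,u) := μ·((1−T)u^g T^{2g−1} − (1−uT)) + (1−uT)(1−T)·G(T,u) ∈ A[T,u]. Then Q is divisible by u−1 in A[T,u], and the polynomial P := Q/(u−1), written P = Σ_{i=0}^{2g} P_i(u) T^i, satisfies: P has degree at most 2g in T; P_0(u) = 1; P_{2g}(u) = u^g; deg_u P_i ≤ ⌊i/2⌋ + 1 for all i; P_{2g−i}(u) = u^{g−i} P_i(u) for all 0 ≤ i ≤ g; and P(1,u) = μ (a constant polynomial in u). -/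

import Mathlib

/- STATEMENT 3:
Let `A` be a commutative ring, `g ≥ 1`, `μ ∈ A`, and let
`G = Σ_{i=0}^{2g−2} G_i(u) T^i ∈ A[u][T]` (modelled as `Polynomial (Polynomial A)`, inner
variable `u`, outer variable `T`) be of degree at most `2g−2` in `T` satisfying:
(i)   `G_{2g−2−i}(u) = u^{g−1−i} G_i(u)` for all `0 ≤ i ≤ g−1`;
(ii)  `G(T,1) = μ·(1 + T + ⋯ + T^{2g−2})` in `A[T]`;
(iii) `G_0(u) = (μ−1) + u`;
(iv)  `deg_u G_i ≤ ⌊i/2⌋ + 1` for all `0 ≤ i ≤ 2g−2`.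
Define `Q(T,u) := μ·((1−T)u^g T^{2g−1} − (1−uT)) + (1−uT)(1−T)·G(T,u) ∈ A[T,u]`.
Then `Q` is divisible by `u−1`, and `P := Q/(u−1) = Σ_{i=0}^{2g} P_i(u) T^i` satisfies:
`deg_T P ≤ 2g`, `P_0(u) = 1`, `P_{2g}(u) = u^g`, `deg_u P_i ≤ ⌊i/2⌋ + 1` for all `i`,
`P_{2g−i}(u) = u^{g−i} P_i(u)` for all `0 ≤ i ≤ g`, and `P(1,u) = μ`. -/

open Polynomial


private lemma ite_sub_helper {R : Type*} [CommRing R] (c : R) (k n : ℕ) :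
    (if k ≤ n then if n - k = 0 then c else 0 else 0) = if n = k then c else 0 := by
  split_ifs <;> first | rfl | (exfalso; omega)

private lemma cancel_X_sub_one {A : Type*} [CommRing A] {p q : Polynomial A}
    (h : (X - 1) * p = (X - 1) * q) : p = q := by
  have hm : (X - 1 : Polynomial A).Monic := by simpa using monic_X_sub_C (1 : A)
  exact hm.isRegular.left h

private lemma nd_add {A : Type*} [CommRing A] {p q : Polynomial A} {n : ℕ}
    (hp : p.natDegree ≤ n) (hq : q.natDegree ≤ n) : (p + q).natDegree ≤ n :=
  le_trans (natDegree_add_le p q) (max_le hp hq)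

private lemma nd_sub {A : Type*} [CommRing A] {p q : Polynomial A} {n : ℕ}
    (hp : p.natDegree ≤ n) (hq : q.natDegree ≤ n) : (p - q).natDegree ≤ n :=
  le_trans (natDegree_sub_le p q) (max_le hp hq)

theorem numerator_of_two_variable_zeta
    {A : Type*} [CommRing A] (g : ℕ) (hg : 1 ≤ g) (μ : A)
    (G : Polynomial (Polynomial A))
    (hGdeg : G.natDegree ≤ 2 * g - 2)
    (hG_fe : ∀ i : ℕ, i ≤ g - 1 →
      G.coeff (2 * g - 2 - i) = Polynomial.X ^ (g - 1 - i) * G.coeff i)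
    (hG_at_one : G.map (Polynomial.evalRingHom (1 : A)) =
      Polynomial.C μ * ∑ i ∈ Finset.range (2 * g - 1), Polynomial.X ^ i)
    (hG_zero : G.coeff 0 = Polynomial.C (μ - 1) + Polynomial.X)
    (hG_clifford : ∀ i : ℕ, i ≤ 2 * g - 2 → (G.coeff i).natDegree ≤ i / 2 + 1) :
    ∃ P : Polynomial (Polynomial A),
      -- `Q = (u − 1) · P`, i.e. `u − 1` divides `Q`
      (Polynomial.C (Polynomial.C μ) *
          ((1 - Polynomial.X) * Polynomial.C (Polynomial.X ^ g) * Polynomial.X ^ (2 * g - 1) -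
            (1 - Polynomial.C Polynomial.X * Polynomial.X)) +
        (1 - Polynomial.C Polynomial.X * Polynomial.X) * (1 - Polynomial.X) * G) =
        Polynomial.C (Polynomial.X - 1) * P ∧
      -- `P` has degree at most `2g` in `T`
      P.natDegree ≤ 2 * g ∧
      -- `P_0(u) = 1`
      P.coeff 0 = 1 ∧
      -- `P_{2g}(u) = u^g`
      P.coeff (2 * g) = Polynomial.X ^ g ∧
      -- `deg_u P_i ≤ ⌊i/2⌋ + 1` for all `i`
      (∀ i : ℕ, (P.coeff i).natDegree ≤ i / 2 + 1) ∧
      -- functional equation `P_{2g−i}(u) = u^{g−i} P_i(u)` for `0 ≤ i ≤ g`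
      (∀ i : ℕ, i ≤ g → P.coeff (2 * g - i) = Polynomial.X ^ (g - i) * P.coeff i) ∧
      -- `P(1,u) = μ`, a constant polynomial in `u`
      P.eval (1 : Polynomial A) = Polynomial.C μ := by
  set Q : Polynomial (Polynomial A) :=
    (Polynomial.C (Polynomial.C μ) *
        ((1 - Polynomial.X) * Polynomial.C (Polynomial.X ^ g) * Polynomial.X ^ (2 * g - 1) -
          (1 - Polynomial.C Polynomial.X * Polynomial.X)) +
      (1 - Polynomial.C Polynomial.X * Polynomial.X) * (1 - Polynomial.X) * G) with hQdef
  have hm : (X - 1 : Polynomial A).Monic := by simpa using monic_X_sub_C (1 : A)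
  -- normal form for Q
  have Qeq : Q = C (C μ * X ^ g) * X ^ (2*g-1) - C (C μ * X ^ g) * X ^ (2*g)
      - C (C μ) + C (C μ * X) * X ^ 1
      + G - C (1 + X) * (G * X ^ 1) + C X * (G * X ^ 2) := by
    obtain ⟨k, hk⟩ : ∃ k, 2*g = k+1 := ⟨2*g-1, by omega⟩
    have hk' : 2*g-1 = k := by omega
    rw [hQdef, hk', hk]
    simp only [map_mul, map_add, map_one, map_pow, pow_succ]
    ring
  -- coefficient formula
  have hQc : ∀ n : ℕ, Q.coeff n
      = (if n = 2*g-1 then C μ * X^g else 0) - (if n = 2*g then C μ * X^g else 0)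
        - (if n = 0 then C μ else 0) + (if n = 1 then C μ * X else 0)
        + G.coeff n - (1+X) * (if 1 ≤ n then G.coeff (n-1) else 0)
        + X * (if 2 ≤ n then G.coeff (n-2) else 0) := by
    intro n
    rw [Qeq]
    simp only [coeff_add, coeff_sub, coeff_C_mul, coeff_mul_X_pow', coeff_C, coeff_X_pow,
      mul_ite, mul_one, mul_zero, ite_sub_helper]
  have hGz : ∀ k : ℕ, 2*g-2 < k → G.coeff k = 0 := fun k hk =>
    coeff_eq_zero_of_natDegree_lt (lt_of_le_of_lt hGdeg hk)
  -- Q vanishes at u = 1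
  have hmap : Q.map (Polynomial.evalRingHom (1 : A)) = 0 := by
    have h1 : ((∑ i ∈ Finset.range (2*g-1), (X:Polynomial A)^i) * (X - 1)) = X^(2*g-1) - 1 :=
      geom_sum_mul X (2*g-1)
    rw [hQdef]
    simp only [Polynomial.map_add, Polynomial.map_mul, Polynomial.map_sub, Polynomial.map_one,
      Polynomial.map_pow, map_C, Polynomial.map_X, hG_at_one, coe_evalRingHom, eval_pow, eval_X,
      eval_C, one_pow, map_one]
    linear_combination (C μ * ((X:Polynomial A) - 1)) * h1
  have hQ1 : ∀ n : ℕ, (Q.coeff n).eval 1 = 0 := by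
    intro n
    have := congrArg (fun p => p.coeff n) hmap
    simpa [coeff_map] using this
  -- coefficientwise factorization
  set Pc : ℕ → Polynomial A := fun n => Q.coeff n /ₘ (X - 1) with hPcdef
  have hfac : ∀ n : ℕ, Q.coeff n = (X - 1) * Pc n := by
    intro n
    have hmod : Q.coeff n %ₘ (X - 1) = 0 := by
      rw [show (X-1:Polynomial A) = X - C 1 by simp, modByMonic_X_sub_C_eq_C_eval, hQ1 n,
        map_zero]
    conv_lhs => rw [← modByMonic_add_div (Q.coeff n) (X - 1)]
    rw [hmod, zero_add]
  set P : Polynomial (Polynomial A) :=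
    ∑ i ∈ Finset.range (2*g+1), C (Pc i) * X^i with hPdef
  have hPc : ∀ i : ℕ, P.coeff i = if i < 2*g+1 then Pc i else 0 := by
    intro i
    rw [hPdef, finset_sum_coeff]
    simp only [coeff_C_mul, coeff_X_pow, mul_ite, mul_one, mul_zero]
    rw [Finset.sum_ite_eq (Finset.range (2*g+1)) i Pc]
    simp [Finset.mem_range]
  have hQhigh : ∀ n : ℕ, 2*g < n → Q.coeff n = 0 := by
    intro n hn
    rw [hQc n, if_neg (by omega), if_neg (by omega), if_neg (by omega), if_neg (by omega),
      if_pos (by omega), if_pos (by omega), hGz n (by omega), hGz (n-1) (by omega),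
      hGz (n-2) (by omega)]
    ring
  have hQP : Q = C (X - 1) * P := by
    refine Polynomial.ext fun n => ?_
    rw [coeff_C_mul, hPc n]
    by_cases hn : n < 2*g+1
    · rw [if_pos hn]; exact hfac n
    · rw [if_neg hn, mul_zero]; exact hQhigh n (by omega)
  -- special coefficients of Q
  have hQ0 : Q.coeff 0 = (X - 1) * 1 := by
    rw [hQc 0, if_neg (by omega), if_neg (by omega), if_pos rfl, if_neg (by omega),
      if_neg (by omega), if_neg (by omega), hG_zero, map_sub, map_one]
    ring
  have hX1 : (X : Polynomial A) * X^(g-1) = X^g := by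
    rw [← pow_succ']; congr 1; omega
  have hQ2g : Q.coeff (2*g) = (X - 1) * X^g := by
    have e0 : G.coeff (2*g-2) = X^(g-1) * G.coeff 0 := by
      have := hG_fe 0 (by omega)
      simpa using this
    rw [hQc (2*g), if_neg (by omega), if_pos rfl, if_neg (by omega), if_neg (by omega),
      if_pos (by omega), if_pos (by omega), hGz (2*g) (by omega),
      show 2*g-1 = 2*g-2+1 from by omega, hGz (2*g-2+1) (by omega), e0, hG_zero, map_sub,
      map_one]
    linear_combination (C μ - 1 + (X:Polynomial A)) * hX1
  -- functional equation at the level of Q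
  have hQfe : ∀ i : ℕ, i ≤ g → Q.coeff (2*g - i) = X^(g-i) * Q.coeff i := by
    intro i hi
    by_cases hig : i = g
    · subst hig
      rw [show 2*i - i = i from by omega, show i - i = 0 from by omega, pow_zero, one_mul]
    by_cases h0 : i = 0
    · subst h0
      rw [Nat.sub_zero, Nat.sub_zero, hQ2g, hQ0]
      ring
    by_cases h1 : i = 1
    · subst h1
      have hg2 : 2 ≤ g := by omega
      have e0 : G.coeff (2*g-2) = X^(g-1) * G.coeff 0 := by simpa using hG_fe 0 (by omega)
      have e1 : G.coeff (2*g-3) = X^(g-2) * G.coeff 1 := by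
        have := hG_fe 1 (by omega)
        rwa [show 2*g-2-1 = 2*g-3 from by omega, show g-1-1 = g-2 from by omega] at this
      rw [hQc (2*g-1), hQc 1, if_pos rfl, if_neg (by omega), if_neg (by omega),
        if_neg (by omega), if_pos (by omega), if_pos (by omega),
        if_neg (by omega), if_neg (by omega), if_neg (by omega), if_pos rfl,
        if_pos (by omega), if_neg (by omega),
        show 2*g-1-1 = 2*g-2 from by omega, show 2*g-1-2 = 2*g-3 from by omega,
        show (1:ℕ)-1 = 0 from rfl, hGz (2*g-1) (by omega), e0, e1]
      have hp1 : (X:Polynomial A)^g = X^(g-1) * X := by rw [← pow_succ]; congr 1; omega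
      have hp2 : (X:Polynomial A) * X^(g-2) = X^(g-1) := by rw [← pow_succ']; congr 1; omega
      linear_combination C μ * hp1 + G.coeff 1 * hp2
    · -- 2 ≤ i ≤ g-1
      have hi2 : 2 ≤ i := by omega
      have hig' : i ≤ g - 1 := by omega
      have e1 : G.coeff (2*g-i) = X^(g+1-i) * G.coeff (i-2) := by
        have := hG_fe (i-2) (by omega)
        rwa [show 2*g-2-(i-2) = 2*g-i from by omega, show g-1-(i-2) = g+1-i from by omega]
          at this
      have e2 : G.coeff (2*g-i-1) = X^(g-i) * G.coeff (i-1) := by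
        have := hG_fe (i-1) (by omega)
        rwa [show 2*g-2-(i-1) = 2*g-i-1 from by omega, show g-1-(i-1) = g-i from by omega]
          at this
      have e3 : G.coeff (2*g-i-2) = X^(g-1-i) * G.coeff i := by
        have := hG_fe i hig'
        rwa [show 2*g-2-i = 2*g-i-2 from by omega] at this
      rw [hQc (2*g-i), hQc i, if_neg (by omega), if_neg (by omega), if_neg (by omega),
        if_neg (by omega), if_pos (by omega), if_pos (by omega),
        if_neg (by omega), if_neg (by omega), if_neg (by omega), if_neg (by omega),
        if_pos (by omega), if_pos (by omega), e1, e2, e3]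
      have hp1 : (X:Polynomial A)^(g+1-i) = X^(g-i) * X := by rw [← pow_succ]; congr 1; omega
      have hp2 : (X:Polynomial A) * X^(g-1-i) = X^(g-i) := by rw [← pow_succ']; congr 1; omega
      linear_combination G.coeff (i-2) * hp1 + G.coeff i * hp2
  -- Clifford-type degree bound for Q coefficients
  have hQd : ∀ i : ℕ, i ≤ 2*g → (Q.coeff i).natDegree ≤ i/2 + 2 := by
    intro i hi
    rw [hQc i]
    have b1 : (if i = 2*g-1 then C μ * X^g else (0:Polynomial A)).natDegree ≤ i/2 + 2 := by
      split_ifs with h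
      · calc (C μ * X^g).natDegree ≤ ((X:Polynomial A)^g).natDegree := natDegree_C_mul_le μ _
          _ ≤ g := natDegree_X_pow_le g
          _ ≤ i/2 + 2 := by omega
      · simp
    have b2 : (if i = 2*g then C μ * X^g else (0:Polynomial A)).natDegree ≤ i/2 + 2 := by
      split_ifs with h
      · calc (C μ * X^g).natDegree ≤ ((X:Polynomial A)^g).natDegree := natDegree_C_mul_le μ _
          _ ≤ g := natDegree_X_pow_le g
          _ ≤ i/2 + 2 := by omega
      · simp
    have b3 : (if i = 0 then C μ else (0:Polynomial A)).natDegree ≤ i/2 + 2 := by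
      split_ifs <;> simp
    have b4 : (if i = 1 then C μ * X else (0:Polynomial A)).natDegree ≤ i/2 + 2 := by
      split_ifs with h
      · calc (C μ * X).natDegree ≤ (X:Polynomial A).natDegree := natDegree_C_mul_le μ _
          _ ≤ 1 := natDegree_X_le
          _ ≤ i/2 + 2 := by omega
      · simp
    have b5 : (G.coeff i).natDegree ≤ i/2 + 2 := by
      by_cases h : i ≤ 2*g-2
      · exact le_trans (hG_clifford i h) (by omega)
      · rw [hGz i (by omega)]; simp
    have b6' : (if 1 ≤ i then G.coeff (i-1) else (0:Polynomial A)).natDegree ≤ i/2 + 1 := by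
      split_ifs with h
      · by_cases h' : i - 1 ≤ 2*g-2
        · exact le_trans (hG_clifford (i-1) h') (by omega)
        · rw [hGz (i-1) (by omega)]; simp
      · simp
    have h1X : (1 + X : Polynomial A).natDegree ≤ 1 := nd_add (by simp) natDegree_X_le
    have b6 : ((1+X) * (if 1 ≤ i then G.coeff (i-1) else 0)).natDegree ≤ i/2 + 2 :=
      le_trans natDegree_mul_le (by omega)
    have b7' : (if 2 ≤ i then G.coeff (i-2) else (0:Polynomial A)).natDegree ≤ i/2 + 1 := by
      split_ifs with h
      · by_cases h' : i - 2 ≤ 2*g-2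
        · exact le_trans (hG_clifford (i-2) h') (by omega)
        · rw [hGz (i-2) (by omega)]; simp
      · simp
    have b7 : ((X:Polynomial A) * (if 2 ≤ i then G.coeff (i-2) else 0)).natDegree ≤ i/2 + 2 := by
      refine le_trans natDegree_mul_le ?_
      have := natDegree_X_le (R := A)
      omega
    exact nd_add (nd_sub (nd_add (nd_add (nd_sub (nd_sub b1 b2) b3) b4) b5) b6) b7
  -- package conclusions
  refine ⟨P, hQP, ?_, ?_, ?_, ?_, ?_, ?_⟩
  · refine natDegree_le_iff_coeff_eq_zero.mpr fun m hm' => ?_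
    rw [hPc m, if_neg (by omega)]
  · rw [hPc 0, if_pos (by omega)]
    exact cancel_X_sub_one (by rw [← hfac 0, hQ0])
  · rw [hPc (2*g), if_pos (by omega)]
    exact cancel_X_sub_one (by rw [← hfac (2*g), hQ2g])
  · intro i
    by_cases hi : i < 2*g+1
    · rw [hPc i, if_pos hi]
      by_cases h0 : Pc i = 0
      · rw [h0]; simp
      · have : Nontrivial A := by
          by_contra h
          rw [not_nontrivial_iff_subsingleton] at h
          exact h0 (Subsingleton.elim _ _)
        have hdeg : (Q.coeff i).natDegree = 1 + (Pc i).natDegree := by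
          rw [hfac i, natDegree_mul' (by
            rw [hm.leadingCoeff, one_mul]; exact leadingCoeff_ne_zero.mpr h0)]
          congr 1
          rw [show (X-1:Polynomial A) = X - C 1 by simp]
          exact natDegree_X_sub_C 1
        have := hQd i (by omega)
        omega
    · rw [hPc i, if_neg hi]; simp
  · intro i hi
    rw [hPc (2*g-i), if_pos (by omega), hPc i, if_pos (by omega)]
    refine cancel_X_sub_one (p := Pc (2*g-i)) (q := X^(g-i) * Pc i) ?_
    rw [← hfac (2*g-i), hQfe i hi, hfac i]
    ring
  · have heval := congrArg (Polynomial.eval (1 : Polynomial A)) hQP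
    rw [hQdef] at heval
    simp only [eval_add, eval_mul, eval_sub, eval_one, eval_pow, eval_C, eval_X, one_pow,
      mul_one, sub_self, zero_mul, mul_zero, add_zero, zero_sub] at heval
    refine cancel_X_sub_one (p := P.eval 1) (q := C μ) ?_
    linear_combination -heval
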